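/- Termination for alternate-free patterns: if the pattern p contains no alternates, no existentials, no match constraints, and no recursion, then the matching machine started from (∅, [], [match p t]) always terminates, reaching either success(θ) for some θ or failure, and the backtracking stack remains empty in every intermediate state. -/

import Mathlib

namespace PyPM
/-- Terms over a signature of function symbols (names with lists of arguments). -/
inductive Tm where
  | app : String → List Tm → Tm


/-- Basic patterns: variables, function applications, and alternates. -/
inductive Pat where
  | var : String → Pat
  | app : String → List Pat → Pat
  | alt : Pat → Pat → Pat

/-- Substitutions: finite maps from variables to terms (modeled as partial functions). -/
abbrev Subst := String → Option Tm

def emptySubst : Subst := fun _ => none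

def Subst.update (θ : Subst) (x : String) (t : Tm) : Subst :=
  fun y => if y = x then some t else θ y

/-- θ ⊆ θ' : every binding of θ is a binding of θ'. -/
def Subst.le (θ θ' : Subst) : Prop := ∀ x t, θ x = some t → θ' x = some t

/-- Declarative matching semantics: θ ⊢ p ≈ t. -/
inductive Matches : Subst → Pat → Tm → Prop where
  | var {θ : Subst} {x : String} {t : Tm} :
      θ x = some t → Matches θ (.var x) t
  | app {θ : Subst} {f : String} {ps : List Pat} {ts : List Tm}
      (hlen : ps.length = ts.length)
      (hargs : ∀ i (h1 : i < ps.length) (h2 : i < ts.length), Matches θ ps[i] ts[i]) :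
      Matches θ (.app f ps) (.app f ts)
  | alt1 {θ : Subst} {p p' : Pat} {t : Tm} :
      Matches θ p t → Matches θ (.alt p p') t
  | alt2 {θ : Subst} {p p' : Pat} {t : Tm} :
      Matches θ p' t → Matches θ (.alt p p') t

/-- Actions in the machine continuation. -/
inductive Action where
  | doMatch : Pat → Tm → Action

abbrev Cont := List Action
abbrev Frame := Subst × Cont
abbrev Stack := List Frame

/-- Machine states. -/
inductive St where
  | success : Subst → St
  | failure : St
  | running : Subst → Stack → Cont → St

/-- Backtracking: pop the stack, or fail if it is empty. -/
def backtrack : Stack → St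
  | [] => .failure
  | (θ, k) :: stk => .running θ stk k

/-- The step relation of the algorithmic matching machine. -/
inductive Step : St → St → Prop where
  | success {θ stk} :
      Step (.running θ stk []) (.success θ)
  | varBind {θ : Subst} {stk x t k} :
      θ x = none →
      Step (.running θ stk (.doMatch (.var x) t :: k)) (.running (θ.update x t) stk k)
  | varBound {θ : Subst} {stk x t k} :
      θ x = some t →
      Step (.running θ stk (.doMatch (.var x) t :: k)) (.running θ stk k)
  | varConflict {θ : Subst} {stk x t t' k} :
      θ x = some t' → t' ≠ t →
      Step (.running θ stk (.doMatch (.var x) t :: k)) (backtrack stk)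
  | fn {θ stk f ps ts k} :
      ps.length = ts.length →
      Step (.running θ stk (.doMatch (.app f ps) (.app f ts) :: k))
           (.running θ stk (((ps.zip ts).map fun pt => .doMatch pt.1 pt.2) ++ k))
  | fnConflict {θ stk f g ps ts k} :
      f ≠ g ∨ ps.length ≠ ts.length →
      Step (.running θ stk (.doMatch (.app f ps) (.app g ts) :: k)) (backtrack stk)
  | alt {θ stk p p' t k} :
      Step (.running θ stk (.doMatch (.alt p p') t :: k))
           (.running θ ((θ, .doMatch p' t :: k) :: stk) (.doMatch p t :: k))

end PyPM
namespace PyPM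

/-- Alternate-free patterns: built only from variables and function applications. -/
inductive AltFree : Pat → Prop where
  | var {x : String} : AltFree (.var x)
  | app {f : String} {ps : List Pat} : (∀ p ∈ ps, AltFree p) → AltFree (.app f ps)

/-- `VarIn x p`: the variable x occurs in the pattern p. -/
inductive VarIn (x : String) : Pat → Prop where
  | var : VarIn x (.var x)
  | app {f : String} {ps : List Pat} {p : Pat} : p ∈ ps → VarIn x p → VarIn x (.app f ps)
  | alt1 {p p' : Pat} : VarIn x p → VarIn x (.alt p p')
  | alt2 {p p' : Pat} : VarIn x p' → VarIn x (.alt p p')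

/-- Number of occurrences of the variable x in a pattern. -/
def varCount (x : String) : Pat → Nat
  | .var y => if y = x then 1 else 0
  | .app _ ps => (ps.attach.map (fun q => varCount x q.1)).sum
  | .alt p q => varCount x p + varCount x q
  decreasing_by
  all_goals first
    | (have := List.sizeOf_lt_of_mem q.2; simp only [Pat.app.sizeOf_spec]; omega)
    | (simp only [Pat.alt.sizeOf_spec]; omega)

/-- A pattern is linear if each variable occurs at most once. -/
def Linear (p : Pat) : Prop := ∀ x, varCount x p ≤ 1

/-- Reading a term as a (ground, alternate-free) pattern. -/
def Tm.toPat : Tm → Pat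
  | .app f ts => .app f (ts.attach.map (fun q => Tm.toPat q.1))
  decreasing_by
  have := List.sizeOf_lt_of_mem q.2; simp only [Tm.app.sizeOf_spec]; omega

/-- Ground, alternate-free patterns: only the function-application constructor. -/
inductive GroundAltFree : Pat → Prop where
  | app {f : String} {ps : List Pat} : (∀ p ∈ ps, GroundAltFree p) → GroundAltFree (.app f ps)

end PyPM

open PyPM

namespace AFAux

def psize : Pat → Nat
  | .var _ => 1
  | .app _ ps => 1 + (ps.attach.map (fun q => psize q.1)).sum
  | .alt p q => 1 + psize p + psize q
  decreasing_by
  all_goals first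
    | (have := List.sizeOf_lt_of_mem q.2; simp only [Pat.app.sizeOf_spec]; omega)
    | (simp only [Pat.alt.sizeOf_spec]; omega)

lemma psize_app (f : String) (ps : List Pat) :
    psize (.app f ps) = 1 + (ps.map psize).sum := by
  rw [psize]
  congr 1
  simp

lemma psize_pos (p : Pat) : 1 ≤ psize p := by
  cases p <;> rw [psize] <;> omega

def asize : Action → Nat
  | .doMatch p _ => psize p

def cmeasure (k : Cont) : Nat := (k.map asize).sum

def AFCont (k : Cont) : Prop := ∀ a ∈ k, ∀ p t, a = Action.doMatch p t → AltFree p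

def Terminal (st : St) : Prop := (∃ θ, st = St.success θ) ∨ st = St.failure

lemma run_aux : ∀ n (θ : Subst) (k : Cont), cmeasure k ≤ n → AFCont k →
    ∃ st : St, Relation.ReflTransGen Step (.running θ [] k) st ∧ Terminal st := by
  intro n
  induction n with
  | zero =>
    intro θ k hm _
    match k with
    | [] => exact ⟨.success θ, Relation.ReflTransGen.single Step.success, Or.inl ⟨θ, rfl⟩⟩
    | .doMatch p t :: k' =>
      exfalso
      have := psize_pos p
      simp [cmeasure, asize] at hm
      omega
  | succ n ih =>
    intro θ k hm haf
    match k with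
    | [] => exact ⟨.success θ, Relation.ReflTransGen.single Step.success, Or.inl ⟨θ, rfl⟩⟩
    | .doMatch p t :: k' =>
      have hafk' : AFCont k' := fun a ha => haf a (List.mem_cons_of_mem _ ha)
      have hafp : AltFree p := haf _ List.mem_cons_self p t rfl
      have hm' : cmeasure (Action.doMatch p t :: k') = psize p + cmeasure k' := by
        simp [cmeasure, asize]
      cases p with
      | var x =>
        have hk' : cmeasure k' ≤ n := by
          have := psize_pos (.var x); rw [hm'] at hm; omega
        cases hθ : θ x with
        | none =>
          obtain ⟨st, hst, hterm⟩ := ih (θ.update x t) k' hk' hafk'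
          exact ⟨st, Relation.ReflTransGen.head (Step.varBind hθ) hst, hterm⟩
        | some t' =>
          by_cases ht : t' = t
          · subst ht
            obtain ⟨st, hst, hterm⟩ := ih θ k' hk' hafk'
            exact ⟨st, Relation.ReflTransGen.head (Step.varBound hθ) hst, hterm⟩
          · exact ⟨.failure,
              Relation.ReflTransGen.single (Step.varConflict hθ ht), Or.inr rfl⟩
      | app f ps =>
        obtain ⟨g, ts⟩ := t
        by_cases hfg : f = g ∧ ps.length = ts.length
        · obtain ⟨rfl, hlen⟩ := hfg
          set k2 : Cont := ((ps.zip ts).map fun pt => .doMatch pt.1 pt.2) ++ k' with hk2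
          have hfst : (ps.zip ts).map Prod.fst = ps :=
            List.map_fst_zip (le_of_eq hlen)
          have hmk2 : cmeasure k2 = (ps.map psize).sum + cmeasure k' := by
            simp only [hk2, cmeasure, List.map_append, List.sum_append, List.map_map]
            congr 2
            calc List.map (asize ∘ fun pt => Action.doMatch pt.1 pt.2) (ps.zip ts)
                = List.map psize ((ps.zip ts).map Prod.fst) := by
                  rw [List.map_map]; rfl
              _ = List.map psize ps := by rw [hfst]
          have hk2n : cmeasure k2 ≤ n := by
            rw [hm', psize_app] at hm; omega
          have hafk2 : AFCont k2 := by
            intro a ha p' t' he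
            rcases List.mem_append.1 ha with h | h
            · obtain ⟨⟨q, s⟩, hmem, rfl⟩ := List.mem_map.1 h
              cases he
              cases hafp with
              | app hps => exact hps _ (by
                  have := List.of_mem_zip hmem; exact this.1)
            · exact hafk' a h p' t' he
          obtain ⟨st, hst, hterm⟩ := ih θ k2 hk2n hafk2
          exact ⟨st, Relation.ReflTransGen.head (Step.fn hlen) hst, hterm⟩
        · have : f ≠ g ∨ ps.length ≠ ts.length := by tauto
          exact ⟨.failure,
            Relation.ReflTransGen.single (Step.fnConflict this), Or.inr rfl⟩
      | alt p1 p2 => cases hafp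

/-- Invariant: running states have empty stack and alternate-free continuations. -/
def Inv : St → Prop
  | .running _ stk k => stk = [] ∧ AFCont k
  | _ => True

lemma inv_step {st st'} (h : Step st st') (hi : Inv st) : Inv st' := by
  cases h with
  | success => trivial
  | varBind h => exact ⟨hi.1, fun a ha => hi.2 a (List.mem_cons_of_mem _ ha)⟩
  | varBound h => exact ⟨hi.1, fun a ha => hi.2 a (List.mem_cons_of_mem _ ha)⟩
  | varConflict h hne =>
    obtain ⟨rfl, -⟩ := hi; simp [backtrack, Inv]
  | fnConflict h =>
    obtain ⟨rfl, -⟩ := hi; simp [backtrack, Inv]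
  | @fn θ stk f ps ts k hlen =>
    refine ⟨hi.1, ?_⟩
    have hafp : AltFree (.app f ps) := hi.2 _ List.mem_cons_self _ _ rfl
    intro a ha p' t' he
    rcases List.mem_append.1 ha with h | h
    · obtain ⟨⟨q, s⟩, hmem, rfl⟩ := List.mem_map.1 h
      cases he
      cases hafp with
      | app hps => exact hps _ (List.of_mem_zip hmem).1
    · exact hi.2 a (List.mem_cons_of_mem _ h) p' t' he
  | alt =>
    exact absurd (hi.2 _ List.mem_cons_self _ _ rfl) (by intro h; cases h)

lemma inv_rtg {st st'} (h : Relation.ReflTransGen Step st st') (hi : Inv st) : Inv st' := by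
  induction h with
  | refl => exact hi
  | tail _ hstep ih => exact inv_step hstep ih

end AFAux

/-- Termination for alternate-free patterns: the machine started on such a pattern
always terminates in success or failure, and the backtracking stack stays empty. -/
theorem altfree_terminates {p : Pat} {t : Tm} (haf : AltFree p) :
    (∃ st : St, Relation.ReflTransGen Step (.running emptySubst [] [.doMatch p t]) st ∧
      ((∃ θ, st = St.success θ) ∨ st = St.failure)) ∧
    (∀ (θ' : Subst) (stk : Stack) (k : Cont),
      Relation.ReflTransGen Step (.running emptySubst [] [.doMatch p t]) (.running θ' stk k) →
      stk = []) := by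
  constructor
  · exact AFAux.run_aux (AFAux.cmeasure [.doMatch p t]) emptySubst [.doMatch p t] le_rfl
      (fun a ha p' t' he => by
        simp at ha; subst ha; cases he; exact haf)
  · intro θ' stk k h
    have hi : AFAux.Inv (.running emptySubst [] [.doMatch p t]) :=
      ⟨rfl, fun a ha p' t' he => by simp at ha; subst ha; cases he; exact haf⟩
    exact (AFAux.inv_rtg h hi).1
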